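/- Let Γ be a set and X = c₀(Γ), the real Banach space of functions on Γ vanishing at infinity with the supremum norm. Then wk_X(A) = ω(A) for every nonempty bounded subset A of X. Moreover, for every nonempty weak* compact set K ⊆ X** there exists a nonempty weakly compact set L ⊆ X such that d̂(K, ι(L)) = d̂(K, ι(X)), where ι : X → X** is the canonical embedding and d̂ is computed in X**. -/

import Mathlib

set_option maxSynthPendingDepth 3

open Metric NormedSpace Filter Topology Set

noncomputable section

/-- A subset of a Banach space is weakly compact if it is compact in the weak topology. -/
def IsWeaklyCompact {Z : Type*} [NormedAddCommGroup Z] [NormedSpace ℝ Z] (K : Set Z) : Prop :=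
  IsCompact (toWeakSpace ℝ Z '' K)

/-- `ca (x_k) = inf_n sup_{i,j ≥ n} ‖x_i - x_j‖`. -/
def ca {Z : Type*} [NormedAddCommGroup Z] (x : ℕ → Z) : ℝ :=
  ⨅ n : ℕ, sSup {r : ℝ | ∃ i j : ℕ, n ≤ i ∧ n ≤ j ∧ r = ‖x i - x j‖}

/-- `wca` is the infimum of `ca` over all subsequences. -/
def wca {Z : Type*} [NormedAddCommGroup Z] (x : ℕ → Z) : ℝ :=
  ⨅ φ : {φ : ℕ → ℕ // StrictMono φ}, ca (x ∘ φ)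

/-- A sequence is weakly Cauchy if `(x*(x_k))` converges for every functional `x*`. -/
def WeaklyCauchy {Z : Type*} [NormedAddCommGroup Z] [NormedSpace ℝ Z] (x : ℕ → Z) : Prop :=
  ∀ f : StrongDual ℝ Z, ∃ l : ℝ, Tendsto (fun n => f (x n)) atTop (nhds l)

/-- A sequence is weakly null if `x*(x_k) → 0` for every functional `x*`. -/
def WeaklyNull {Z : Type*} [NormedAddCommGroup Z] [NormedSpace ℝ Z] (x : ℕ → Z) : Prop :=
  ∀ f : StrongDual ℝ Z, Tendsto (fun n => f (x n)) atTop (nhds 0)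

/-- `cc T`: measure of non-complete-continuity of an operator. -/
def cc {X Y : Type*} [NormedAddCommGroup X] [NormedSpace ℝ X]
    [NormedAddCommGroup Y] [NormedSpace ℝ Y] (T : X →L[ℝ] Y) : ℝ :=
  sSup {r : ℝ | ∃ x : ℕ → X, (∀ n, ‖x n‖ ≤ 1) ∧ WeaklyCauchy x ∧
    r = ca (fun n => T (x n))}

/-- Non-symmetrized Hausdorff distance `d̂(A,B) = sup_{a ∈ A} dist(a, B)`. -/
def dhat {Z : Type*} [NormedAddCommGroup Z] (A B : Set Z) : ℝ :=
  ⨆ a : A, infDist (a : Z) B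

/-- de Blasi measure of weak non-compactness. -/
def deBlasiOmega {Z : Type*} [NormedAddCommGroup Z] [NormedSpace ℝ Z] (A : Set Z) : ℝ :=
  ⨅ K : {K : Set Z // K.Nonempty ∧ IsWeaklyCompact K}, dhat A K

/-- Hausdorff measure of non-compactness. -/
def hausdorffChi {Z : Type*} [NormedAddCommGroup Z] (A : Set Z) : ℝ :=
  ⨅ F : {F : Set Z // F.Finite ∧ F.Nonempty}, dhat A F

/-- weak* closure of a set of functionals. -/
def wstarClosure {E : Type*} [NormedAddCommGroup E] [NormedSpace ℝ E]
    (A : Set (StrongDual ℝ E)) : Set (StrongDual ℝ E) :=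
  StrongDual.toWeakDual ⁻¹' closure (StrongDual.toWeakDual '' A)

/-- `wk_Z(A) = d̂(cl_{w*}(ι(A)), ι(Z))` in the bidual. -/
def wkMeasure {Z : Type*} [NormedAddCommGroup Z] [NormedSpace ℝ Z] (A : Set Z) : ℝ :=
  dhat (wstarClosure ((inclusionInDoubleDual ℝ Z) '' A))
    (Set.range (inclusionInDoubleDual ℝ Z))

/-- `z` is a weak* cluster point of the sequence `u` of functionals. -/
def IsWeakStarClusterPt {E : Type*} [NormedAddCommGroup E] [NormedSpace ℝ E]
    (z : StrongDual ℝ E) (u : ℕ → StrongDual ℝ E) : Prop :=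
  MapClusterPt (StrongDual.toWeakDual z) atTop (fun n => StrongDual.toWeakDual (u n))

/-- `wck(A)`. -/
def wck {Z : Type*} [NormedAddCommGroup Z] [NormedSpace ℝ Z] (A : Set Z) : ℝ :=
  sSup {r : ℝ | ∃ x : ℕ → Z, (∀ n, x n ∈ A) ∧
    r = sInf {s : ℝ | ∃ (z : StrongDual ℝ (StrongDual ℝ Z)) (x₀ : Z),
      IsWeakStarClusterPt z (fun n => inclusionInDoubleDual ℝ Z (x n)) ∧
      s = ‖z - inclusionInDoubleDual ℝ Z x₀‖}}

/-- `ca_ρ` of a sequence. -/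
def caRho {Z : Type*} [NormedAddCommGroup Z] [NormedSpace ℝ Z] (x : ℕ → Z) : ℝ :=
  ⨆ K : {K : Set (StrongDual ℝ Z) // K ⊆ closedBall 0 1 ∧ IsWeaklyCompact K},
    ⨅ n : ℕ, sSup {r : ℝ | ∃ i j : ℕ, n ≤ i ∧ n ≤ j ∧
      ∃ f ∈ K.1, r = |f (x i) - f (x j)|}

/-- `wca_ρ` of a sequence. -/
def wcaRho {Z : Type*} [NormedAddCommGroup Z] [NormedSpace ℝ Z] (x : ℕ → Z) : ℝ :=
  ⨅ φ : {φ : ℕ → ℕ // StrictMono φ}, caRho (x ∘ φ)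

/-- `ca_{ρ*}` of a sequence in a dual space. -/
def caRhoStar {Z : Type*} [NormedAddCommGroup Z] [NormedSpace ℝ Z]
    (x : ℕ → StrongDual ℝ Z) : ℝ :=
  ⨆ K : {K : Set Z // K ⊆ closedBall 0 1 ∧ IsWeaklyCompact K},
    ⨅ n : ℕ, sSup {r : ℝ | ∃ i j : ℕ, n ≤ i ∧ n ≤ j ∧
      ∃ v ∈ K.1, r = |x i v - x j v|}

/-- `wca_{ρ*}` of a sequence in a dual space. -/
def wcaRhoStar {Z : Type*} [NormedAddCommGroup Z] [NormedSpace ℝ Z]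
    (x : ℕ → StrongDual ℝ Z) : ℝ :=
  ⨅ φ : {φ : ℕ → ℕ // StrictMono φ}, caRhoStar (x ∘ φ)

/-- `δ(x_k)`. -/
def deltaSeq {Z : Type*} [NormedAddCommGroup Z] [NormedSpace ℝ Z] (x : ℕ → Z) : ℝ :=
  ⨆ f : (closedBall (0 : StrongDual ℝ Z) 1),
    ⨅ n : ℕ, sSup {r : ℝ | ∃ i j : ℕ, n ≤ i ∧ n ≤ j ∧
      r = |(f : StrongDual ℝ Z) (x i) - (f : StrongDual ℝ Z) (x j)|}

/-- The adjoint of a bounded operator between Banach spaces. -/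
def adjointOp {X Y : Type*} [NormedAddCommGroup X] [NormedSpace ℝ X]
    [NormedAddCommGroup Y] [NormedSpace ℝ Y] (T : X →L[ℝ] Y) :
    StrongDual ℝ Y →L[ℝ] StrongDual ℝ X :=
  (ContinuousLinearMap.compL ℝ X Y ℝ).flip T

set_option maxHeartbeats 1000000
section helpers
open ZeroAtInfty
open scoped Classical Pointwise
set_option linter.unusedSectionVars false

variable {Γ : Type*} [TopologicalSpace Γ] [DiscreteTopology Γ]

/-- evaluation functional -/
def delta (γ : Γ) : C₀(Γ, ℝ) →L[ℝ] ℝ :=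
  LinearMap.mkContinuous
    { toFun := fun x => x γ, map_add' := by intros; simp, map_smul' := by intros; simp } 1
    (by intro x
        simp only [LinearMap.coe_mk, AddHom.coe_mk, one_mul]
        rw [← ZeroAtInftyContinuousMap.norm_toBCF_eq_norm]
        exact (x.toBCF.norm_coe_le_norm γ))

@[simp] lemma delta_apply (γ : Γ) (x : C₀(Γ, ℝ)) : delta γ x = x γ := rfl

lemma norm_delta_le (γ : Γ) : ‖(delta (Γ := Γ) γ)‖ ≤ 1 :=
  LinearMap.mkContinuous_norm_le _ zero_le_one _

/-- norm characterization -/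
lemma c0_norm_le {x : C₀(Γ, ℝ)} {c : ℝ} (hc : 0 ≤ c) : ‖x‖ ≤ c ↔ ∀ γ, |x γ| ≤ c := by
  rw [← ZeroAtInftyContinuousMap.norm_toBCF_eq_norm]
  simpa using BoundedContinuousFunction.norm_le (f := x.toBCF) hc

/-- indicator of a single point -/
def eC0 (γ : Γ) : C₀(Γ, ℝ) :=
  ⟨⟨fun γ' => if γ' = γ then 1 else 0, continuous_of_discreteTopology⟩, by
    rw [cocompact_eq_cofinite]
    apply Tendsto.congr' _ tendsto_const_nhds
    filter_upwards [(finite_singleton γ).compl_mem_cofinite] with γ' hγ'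
    have : γ' ≠ γ := by simpa using hγ'
    simp [this]⟩

@[simp] lemma eC0_apply (γ γ' : Γ) : eC0 γ γ' = if γ' = γ then 1 else 0 := rfl

lemma norm_eC0_le (γ : Γ) : ‖(eC0 γ : C₀(Γ,ℝ))‖ ≤ 1 := by
  rw [c0_norm_le zero_le_one]
  intro γ'
  by_cases h : γ' = γ <;> simp [h]

/-- the fundamental expansion: x = Σ x γ • e γ in c₀ -/
lemma c0_hasSum_single (x : C₀(Γ, ℝ)) : HasSum (fun γ => x γ • eC0 γ) x := by
  rw [HasSum, SummationFilter.unconditional_filter, Metric.tendsto_atTop]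
  intro ε hε
  have hfin : {γ : Γ | ε/2 ≤ |x γ|}.Finite := by
    have hx := zero_at_infty x
    rw [cocompact_eq_cofinite, tendsto_def] at hx
    have := hx (Metric.ball 0 (ε/2)) (Metric.ball_mem_nhds 0 (by linarith))
    rw [mem_cofinite] at this
    apply this.subset
    intro γ hγ
    simp only [mem_compl_iff, mem_preimage, Metric.mem_ball, Real.dist_eq, sub_zero, not_lt]
    exact hγ
  refine ⟨hfin.toFinset, fun F hF => ?_⟩
  rw [dist_eq_norm]
  have h0 : (0:ℝ) ≤ ε/2 := by linarith
  have key : ‖∑ γ ∈ F, x γ • eC0 γ - x‖ ≤ ε/2 := by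
    rw [c0_norm_le h0]
    intro γ'
    have hsum : (∑ γ ∈ F, x γ • eC0 γ) γ' = if γ' ∈ F then x γ' else 0 :=
      calc (∑ γ ∈ F, x γ • eC0 γ) γ' = delta γ' (∑ γ ∈ F, x γ • eC0 γ) := rfl
        _ = ∑ γ ∈ F, delta γ' (x γ • eC0 γ) := map_sum (delta γ') _ F
        _ = if γ' ∈ F then x γ' else 0 := by simp
    by_cases hγ' : γ' ∈ F
    · have hv : (∑ γ ∈ F, x γ • eC0 γ) γ' = x γ' := by rw [hsum, if_pos hγ']
      simp [ZeroAtInftyContinuousMap.coe_sub, Pi.sub_apply, hv, h0]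
    · have hv : (∑ γ ∈ F, x γ • eC0 γ) γ' = 0 := by rw [hsum, if_neg hγ']
      have hout : |x γ'| ≤ ε/2 := by
        by_contra h
        push_neg at h
        exact hγ' (hF (by simp only [Finite.mem_toFinset, mem_setOf_eq]; exact le_of_lt h))
      simp only [ZeroAtInftyContinuousMap.coe_sub, Pi.sub_apply, hv]
      simpa using hout
  linarith

lemma sum_abs_coef_le (μ : StrongDual ℝ C₀(Γ, ℝ)) (F : Finset Γ) :
    ∑ γ ∈ F, |μ (eC0 γ)| ≤ ‖μ‖ := by
  set sgn : Γ → ℝ := fun γ => if 0 ≤ μ (eC0 γ) then 1 else -1 with hsgn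
  set xF : C₀(Γ, ℝ) := ∑ γ ∈ F, sgn γ • eC0 γ with hxF
  have hval : ∀ γ', xF γ' = if γ' ∈ F then sgn γ' else 0 := by
    intro γ'
    calc xF γ' = delta γ' xF := rfl
      _ = ∑ γ ∈ F, delta γ' (sgn γ • eC0 γ) := map_sum (delta γ') _ F
      _ = if γ' ∈ F then sgn γ' else 0 := by simp
  have hnorm : ‖xF‖ ≤ 1 := by
    rw [c0_norm_le zero_le_one]
    intro γ'
    rw [hval γ']
    split
    · rw [hsgn]; dsimp only; split <;> norm_num
    · norm_num
  have happ : μ xF = ∑ γ ∈ F, |μ (eC0 γ)| := by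
    rw [hxF, map_sum]
    apply Finset.sum_congr rfl
    intro γ _
    rw [map_smul, hsgn]
    dsimp only
    split
    · rw [one_smul, abs_of_nonneg ‹_›]
    · rw [smul_eq_mul, neg_one_mul, abs_of_neg (lt_of_not_ge ‹_›)]
  calc ∑ γ ∈ F, |μ (eC0 γ)| = μ xF := happ.symm
    _ ≤ |μ xF| := le_abs_self _
    _ ≤ ‖μ‖ * ‖xF‖ := μ.le_opNorm xF
    _ ≤ ‖μ‖ * 1 := by
        apply mul_le_mul_of_nonneg_left hnorm (norm_nonneg μ)
    _ = ‖μ‖ := mul_one _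

lemma summable_abs_coef (μ : StrongDual ℝ C₀(Γ, ℝ)) : Summable (fun γ => |μ (eC0 γ)|) :=
  summable_of_sum_le (fun γ => abs_nonneg _) (sum_abs_coef_le μ)

lemma tsum_abs_coef_le (μ : StrongDual ℝ C₀(Γ, ℝ)) : ∑' γ, |μ (eC0 γ)| ≤ ‖μ‖ :=
  Summable.tsum_le_of_sum_le (summable_abs_coef μ) (sum_abs_coef_le μ)

/-- applying μ termwise -/
lemma hasSum_mu_apply (μ : StrongDual ℝ C₀(Γ, ℝ)) (x : C₀(Γ, ℝ)) :
    HasSum (fun γ => μ (eC0 γ) * x γ) (μ x) := by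
  have := (c0_hasSum_single x).mapL μ
  simpa [mul_comm] using this

/-- μ = Σ μ(e γ) • δ_γ in the dual -/
lemma hasSum_dual_rep (μ : StrongDual ℝ C₀(Γ, ℝ)) :
    HasSum (fun γ => μ (eC0 γ) • delta γ) μ := by
  have hs : Summable (fun γ => μ (eC0 γ) • delta γ) := by
    apply Summable.of_norm_bounded (summable_abs_coef μ)
    intro γ
    rw [norm_smul]
    calc ‖μ (eC0 γ)‖ * ‖delta (Γ := Γ) γ‖ ≤ ‖μ (eC0 γ)‖ * 1 :=
          mul_le_mul_of_nonneg_left (norm_delta_le γ) (norm_nonneg _)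
      _ = |μ (eC0 γ)| := by rw [mul_one]; rfl
  have hν := hs.hasSum
  convert hν using 1
  symm
  ext x
  have h1 := hν.mapL (ContinuousLinearMap.apply ℝ ℝ x)
  have h2 : HasSum (fun γ => μ (eC0 γ) * x γ) ((∑' γ, μ (eC0 γ) • delta γ) x) := by
    simpa using h1
  exact h2.unique (hasSum_mu_apply μ x)

/-- bidual expansion -/
lemma hasSum_bidual_apply (f : StrongDual ℝ (StrongDual ℝ C₀(Γ, ℝ))) (μ : StrongDual ℝ C₀(Γ, ℝ)) :
    HasSum (fun γ => μ (eC0 γ) * f (delta γ)) (f μ) := by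
  have := (hasSum_dual_rep μ).mapL f
  simpa using this

/-- level sets of c₀ functions are finite -/
lemma c0_finite_level (x : C₀(Γ, ℝ)) {ε : ℝ} (hε : 0 < ε) : {γ : Γ | ε ≤ |x γ|}.Finite := by
  have hx := zero_at_infty x
  rw [cocompact_eq_cofinite, tendsto_def] at hx
  have := hx (Metric.ball 0 ε) (Metric.ball_mem_nhds 0 hε)
  rw [mem_cofinite] at this
  apply this.subset
  intro γ hγ
  simp only [mem_compl_iff, mem_preimage, Metric.mem_ball, Real.dist_eq, sub_zero, not_lt]
  exact hγ

/-- truncation function -/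
def clampd (r t : ℝ) : ℝ := t - max (min t r) (-r)

lemma clampd_eq {r : ℝ} (hr : 0 ≤ r) (t : ℝ) :
    clampd r t = if r < t then t - r else if t < -r then t + r else 0 := by
  unfold clampd
  split_ifs with h1 h2
  · rw [min_eq_right h1.le, max_eq_left (by linarith)]
  · rw [min_eq_left (by linarith), max_eq_right (by linarith)]; ring
  · push_neg at h1 h2
    rw [min_eq_left h1, max_eq_left h2]; ring

lemma continuous_clampd (r : ℝ) : Continuous (clampd r) := by
  unfold clampd; fun_prop

lemma abs_sub_clampd_le {r : ℝ} (hr : 0 ≤ r) (t : ℝ) : |t - clampd r t| ≤ r := by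
  rw [clampd_eq hr]
  split_ifs with h1 h2 <;> rw [abs_le] <;> constructor <;> linarith

lemma abs_clampd_le_abs {r : ℝ} (hr : 0 ≤ r) (t : ℝ) : |clampd r t| ≤ |t| := by
  rw [clampd_eq hr]
  rcases abs_cases t with ⟨he, hs⟩ | ⟨he, hs⟩ <;>
    split_ifs with h1 h2 <;> rw [abs_le] <;> constructor <;> linarith

lemma abs_le_of_clampd {r ε t : ℝ} (hr : 0 ≤ r) (hε0 : 0 < ε)
    (hε : ε ≤ |clampd r t|) : r + ε ≤ |t| := by
  rw [clampd_eq hr] at hε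
  split_ifs at hε with h1 h2
  · rw [abs_of_nonneg (by linarith)] at hε
    rw [abs_of_nonneg (by linarith)]
    linarith
  · rw [abs_of_nonpos (by linarith)] at hε
    rw [abs_of_neg (by linarith)]
    linarith
  · simp at hε; linarith

/-- the truncated element of c₀ associated to a bidual element -/
def trC0 (r : ℝ) (f : StrongDual ℝ (StrongDual ℝ C₀(Γ, ℝ))) : C₀(Γ, ℝ) :=
  if h : Tendsto (fun γ => clampd r (f (delta γ))) (cocompact Γ) (nhds 0) then
    ⟨⟨fun γ => clampd r (f (delta γ)), continuous_of_discreteTopology⟩, h⟩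
  else 0

lemma trC0_apply {r : ℝ} {f : StrongDual ℝ (StrongDual ℝ C₀(Γ, ℝ))}
    (h : Tendsto (fun γ => clampd r (f (delta γ))) (cocompact Γ) (nhds 0)) (γ : Γ) :
    trC0 r f γ = clampd r (f (delta γ)) := by
  rw [trC0, dif_pos h]; rfl

/-- truncation is well-defined (zero at infinity) whenever `f` is within `r` of `ι X`. -/
lemma trC0_tendsto {r : ℝ} (hr : 0 ≤ r) {f : StrongDual ℝ (StrongDual ℝ C₀(Γ, ℝ))}
    (hf : infDist f (Set.range (inclusionInDoubleDual ℝ C₀(Γ, ℝ))) ≤ r) :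
    Tendsto (fun γ => clampd r (f (delta γ))) (cocompact Γ) (nhds 0) := by
  rw [cocompact_eq_cofinite]
  rw [Metric.tendsto_nhds]
  intro ε hε
  rw [eventually_cofinite]
  have hlt : infDist f (Set.range (inclusionInDoubleDual ℝ C₀(Γ, ℝ))) < r + ε/2 := by linarith
  obtain ⟨g, ⟨x, rfl⟩, hg⟩ := (infDist_lt_iff (Set.range_nonempty _)).mp hlt
  have hsub : {γ : Γ | ¬ dist (clampd r (f (delta γ))) 0 < ε} ⊆ {γ : Γ | ε/2 ≤ |x γ|} := by
    intro γ hγ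
    simp only [mem_setOf_eq, Real.dist_eq, sub_zero, not_lt] at hγ
    have h1 : r + ε ≤ |f (delta γ)| := abs_le_of_clampd hr hε hγ
    have h2 : |f (delta γ) - x γ| < r + ε/2 := by
      have : |(f - inclusionInDoubleDual ℝ C₀(Γ, ℝ) x) (delta γ)| ≤
          ‖f - inclusionInDoubleDual ℝ C₀(Γ, ℝ) x‖ * ‖delta (Γ := Γ) γ‖ :=
        (f - inclusionInDoubleDual ℝ C₀(Γ, ℝ) x).le_opNorm _
      have hle : |(f - inclusionInDoubleDual ℝ C₀(Γ, ℝ) x) (delta γ)| ≤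
          ‖f - inclusionInDoubleDual ℝ C₀(Γ, ℝ) x‖ := by
        calc |(f - inclusionInDoubleDual ℝ C₀(Γ, ℝ) x) (delta γ)| ≤
            ‖f - inclusionInDoubleDual ℝ C₀(Γ, ℝ) x‖ * ‖delta (Γ := Γ) γ‖ := this
          _ ≤ ‖f - inclusionInDoubleDual ℝ C₀(Γ, ℝ) x‖ * 1 :=
            mul_le_mul_of_nonneg_left (norm_delta_le γ) (norm_nonneg _)
          _ = _ := mul_one _
      have heq : (f - inclusionInDoubleDual ℝ C₀(Γ, ℝ) x) (delta γ) = f (delta γ) - x γ := by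
        simp [inclusionInDoubleDual]
      rw [heq] at hle
      calc |f (delta γ) - x γ| ≤ ‖f - inclusionInDoubleDual ℝ C₀(Γ, ℝ) x‖ := hle
        _ = dist f (inclusionInDoubleDual ℝ C₀(Γ, ℝ) x) := (dist_eq_norm _ _).symm
        _ < r + ε/2 := hg
    have : |x γ| ≥ |f (delta γ)| - |f (delta γ) - x γ| := by
      have := abs_sub_abs_le_abs_sub (f (delta γ)) (x γ)
      linarith [abs_sub_comm (f (delta γ)) (x γ)]
    simp only [mem_setOf_eq]
    linarith
  exact (c0_finite_level x (by linarith)).subset hsub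

/-- the key norm estimate -/
lemma norm_sub_trC0_le {r : ℝ} (hr : 0 ≤ r) {f : StrongDual ℝ (StrongDual ℝ C₀(Γ, ℝ))}
    (h : Tendsto (fun γ => clampd r (f (delta γ))) (cocompact Γ) (nhds 0)) :
    ‖f - inclusionInDoubleDual ℝ C₀(Γ, ℝ) (trC0 r f)‖ ≤ r := by
  set y := trC0 r f with hy
  apply ContinuousLinearMap.opNorm_le_bound _ hr
  intro μ
  have hA := hasSum_bidual_apply f μ
  have hB := hasSum_mu_apply μ y
  have hAB : HasSum (fun γ => μ (eC0 γ) * (f (delta γ) - y γ))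
      (f μ - μ y) := by
    have := hA.sub hB
    convert this using 2 with γ
    rfl
    ring
  have happ : (f - inclusionInDoubleDual ℝ C₀(Γ, ℝ) y) μ = f μ - μ y := by
    simp [inclusionInDoubleDual]
  rw [happ]
  have hbound : ∀ γ, |μ (eC0 γ) * (f (delta γ) - y γ)| ≤ |μ (eC0 γ)| * r := by
    intro γ
    rw [abs_mul]
    apply mul_le_mul_of_nonneg_left _ (abs_nonneg _)
    rw [hy, trC0_apply h γ]
    exact abs_sub_clampd_le hr _
  have hsummable : Summable (fun γ => |μ (eC0 γ) * (f (delta γ) - y γ)|) := by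
    apply Summable.of_nonneg_of_le (fun γ => abs_nonneg _) hbound
    exact (summable_abs_coef μ).mul_right r
  calc ‖f μ - μ y‖ = ‖∑' γ, μ (eC0 γ) * (f (delta γ) - y γ)‖ := by rw [hAB.tsum_eq]
    _ ≤ ∑' γ, ‖μ (eC0 γ) * (f (delta γ) - y γ)‖ := norm_tsum_le_tsum_norm (by simpa [abs_mul] using hsummable)
    _ ≤ ∑' γ, |μ (eC0 γ)| * r := Summable.tsum_le_tsum hbound (by simpa [abs_mul] using hsummable) ((summable_abs_coef μ).mul_right r)
    _ = (∑' γ, |μ (eC0 γ)|) * r := tsum_mul_right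
    _ ≤ ‖μ‖ * r := mul_le_mul_of_nonneg_right (tsum_abs_coef_le μ) hr
    _ = r * ‖μ‖ := mul_comm _ _

section dhatlemmas
variable {Z : Type*} [NormedAddCommGroup Z] [NormedSpace ℝ Z]

def dhat' (A B : Set Z) : ℝ := ⨆ a : A, infDist (a : Z) B

lemma dhat'_nonneg (A B : Set Z) : 0 ≤ dhat' A B := by
  rcases isEmpty_or_nonempty A with h | h
  · rw [dhat', iSup_of_empty', Real.sSup_empty]
  · exact Real.iSup_nonneg fun a => infDist_nonneg

lemma dhat'_le {A B : Set Z} {r : ℝ} (hA : A.Nonempty)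
    (h : ∀ a ∈ A, infDist a B ≤ r) : dhat' A B ≤ r := by
  haveI : Nonempty A := hA.to_subtype
  exact ciSup_le fun a => h a a.2

lemma bddAbove_infDist {A B : Set Z} (hA : Bornology.IsBounded A) (hB : B.Nonempty) :
    BddAbove (Set.range fun a : A => infDist (a : Z) B) := by
  obtain ⟨b, hb⟩ := hB
  obtain ⟨C, hC⟩ := hA.exists_norm_le
  refine ⟨C + ‖b‖, ?_⟩
  rintro v ⟨a, rfl⟩
  calc infDist (a : Z) B ≤ dist (a : Z) b := infDist_le_dist_of_mem hb
    _ ≤ ‖(a : Z)‖ + ‖b‖ := by rw [dist_eq_norm]; exact (norm_sub_le _ _)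
    _ ≤ C + ‖b‖ := by linarith [hC a a.2]

lemma le_dhat' {A B : Set Z} {a : Z} (hA : Bornology.IsBounded A) (hB : B.Nonempty)
    (ha : a ∈ A) : infDist a B ≤ dhat' A B :=
  le_ciSup (bddAbove_infDist hA hB) (⟨a, ha⟩ : A)

lemma dhat'_anti {A B B' : Set Z} (hA : Bornology.IsBounded A) (hB : B.Nonempty)
    (h : B ⊆ B') : dhat' A B' ≤ dhat' A B := by
  rcases isEmpty_or_nonempty A with hA' | hA'
  · rw [dhat', dhat']
    rw [iSup_of_empty', iSup_of_empty' (fun a : A => infDist (a : Z) B), Real.sSup_empty]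
  · exact ciSup_mono (bddAbove_infDist hA hB) fun a =>
      infDist_le_infDist_of_subset h hB

end dhatlemmas

/-- weak-star compact sets of functionals are norm bounded -/
lemma wstar_compact_bounded {E : Type*} [NormedAddCommGroup E] [NormedSpace ℝ E]
    [CompleteSpace E] {K : Set (StrongDual ℝ E)}
    (hK : IsCompact (StrongDual.toWeakDual '' K)) :
    ∃ C : ℝ, 0 ≤ C ∧ ∀ f ∈ K, ‖f‖ ≤ C := by
  have hpt : ∀ x : E, ∃ C, ∀ i : K, ‖(i : StrongDual ℝ E) x‖ ≤ C := by
    intro x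
    have hcont : Continuous fun g : WeakDual ℝ E => g x := WeakDual.eval_continuous x
    have himg : IsCompact ((fun g : WeakDual ℝ E => g x) '' (StrongDual.toWeakDual '' K)) :=
      hK.image hcont
    obtain ⟨C, hC⟩ := himg.isBounded.exists_norm_le
    refine ⟨C, fun i => ?_⟩
    exact hC _ ⟨StrongDual.toWeakDual (i : StrongDual ℝ E), ⟨mem_image_of_mem _ i.2, rfl⟩⟩
  obtain ⟨C', hC'⟩ := banach_steinhaus (g := fun i : K => (i : StrongDual ℝ E)) hpt
  exact ⟨max C' 0, le_max_right _ _, fun f hf => le_max_of_le_left (hC' ⟨f, hf⟩)⟩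

/-- the truncated image of a weak-star compact set is weakly compact -/
lemma isCompact_weak_trC0 {r C : ℝ} (hr : 0 ≤ r) (hC : 0 ≤ C)
    {K : Set (StrongDual ℝ (StrongDual ℝ C₀(Γ, ℝ)))}
    (hK : IsCompact (StrongDual.toWeakDual '' K))
    (hCK : ∀ f ∈ K, ‖f‖ ≤ C)
    (htd : ∀ f ∈ K, Tendsto (fun γ => clampd r (f (delta γ))) (cocompact Γ) (nhds 0)) :
    IsCompact (toWeakSpace ℝ C₀(Γ, ℝ) '' (trC0 r '' K)) := by
  set S : Set (WeakDual ℝ (StrongDual ℝ C₀(Γ, ℝ))) := StrongDual.toWeakDual '' K with hS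
  haveI : CompactSpace S := isCompact_iff_compactSpace.mp hK
  set F : S → WeakSpace ℝ C₀(Γ, ℝ) :=
    fun s => toWeakSpace ℝ C₀(Γ, ℝ) (trC0 r (WeakDual.toStrongDual s.1)) with hF
  have hmem : ∀ s : S, WeakDual.toStrongDual s.1 ∈ K := by
    rintro ⟨s, g, hg, rfl⟩
    exact hg
  have hcont : Continuous F := by
    apply WeakBilin.continuous_of_continuous_eval
    intro μ
    have heq : (fun s : S => ((topDualPairing ℝ C₀(Γ, ℝ)).flip (F s)) μ) =
        fun s : S => ∑' γ, μ (eC0 γ) * clampd r (WeakDual.toStrongDual s.1 (delta γ)) := by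
      funext s
      have h1 : ((topDualPairing ℝ C₀(Γ, ℝ)).flip (F s)) μ =
          μ (trC0 r (WeakDual.toStrongDual s.1)) := rfl
      rw [h1]
      have h2 := hasSum_mu_apply μ (trC0 r (WeakDual.toStrongDual s.1))
      rw [← h2.tsum_eq]
      congr 1
      funext γ
      rw [trC0_apply (htd _ (hmem s)) γ]
    rw [heq]
    apply continuous_tsum
      (u := fun γ => |μ (eC0 γ)| * C)
    · intro γ
      apply Continuous.mul continuous_const
      apply (continuous_clampd r).comp
      exact (WeakDual.eval_continuous (delta γ)).comp continuous_subtype_val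
    · exact (summable_abs_coef μ).mul_right C
    · intro γ s
      rw [Real.norm_eq_abs, abs_mul]
      apply mul_le_mul_of_nonneg_left _ (abs_nonneg _)
      calc |clampd r (WeakDual.toStrongDual s.1 (delta γ))| ≤
            |WeakDual.toStrongDual s.1 (delta γ)| := abs_clampd_le_abs hr _
        _ ≤ ‖WeakDual.toStrongDual s.1‖ * ‖delta (Γ := Γ) γ‖ :=
            (WeakDual.toStrongDual s.1).le_opNorm _
        _ ≤ C * 1 := mul_le_mul (hCK _ (hmem s)) (norm_delta_le γ) (norm_nonneg _) hC
        _ = C := mul_one C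
  have himg : toWeakSpace ℝ C₀(Γ, ℝ) '' (trC0 r '' K) = Set.range F := by
    ext v
    constructor
    · rintro ⟨y, ⟨f, hf, rfl⟩, rfl⟩
      exact ⟨⟨StrongDual.toWeakDual f, mem_image_of_mem _ hf⟩, rfl⟩
    · rintro ⟨⟨s, g, hg, rfl⟩, rfl⟩
      exact ⟨trC0 r g, mem_image_of_mem _ hg, rfl⟩
  rw [himg]
  exact isCompact_range hcont

-- now the real work
section main
variable {Γ : Type*} [TopologicalSpace Γ] [DiscreteTopology Γ]

local notation "X" => C₀(Γ, ℝ)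
local notation "ι" => inclusionInDoubleDual ℝ C₀(Γ, ℝ)

lemma wk_le_dhat {A K : Set X} (hA : A.Nonempty) (hAb : Bornology.IsBounded A)
    (hKne : K.Nonempty) (hKwc : IsCompact (toWeakSpace ℝ X '' K)) :
    wkMeasure A ≤ dhat A K := by
  apply le_of_forall_pos_le_add
  intro ε hε
  set t := dhat A K with ht
  -- the continuous map J
  set J : WeakSpace ℝ X → WeakDual ℝ (StrongDual ℝ X) :=
    fun w => StrongDual.toWeakDual (ι ((toWeakSpace ℝ X).symm w)) with hJ
  have hJcont : Continuous J := by
    apply WeakDual.continuous_of_continuous_eval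
    intro μ
    exact WeakBilin.eval_continuous ((topDualPairing ℝ X).flip) μ
  have hS1 : IsCompact (J '' (toWeakSpace ℝ X '' K)) := hKwc.image hJcont
  have hS2 : IsCompact (WeakDual.toStrongDual ⁻¹' closedBall 0 (t + ε) :
      Set (WeakDual ℝ (StrongDual ℝ X))) := WeakDual.isCompact_closedBall (𝕜 := ℝ) (E := StrongDual ℝ C₀(Γ, ℝ)) 0 (t + ε)
  set S := J '' (toWeakSpace ℝ X '' K) + (WeakDual.toStrongDual ⁻¹' closedBall 0 (t + ε) : Set (WeakDual ℝ (StrongDual ℝ X))) with hSdef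
  have hScompact : IsCompact S := hS1.add hS2
  have hSclosed : IsClosed S := hScompact.isClosed
  have hsub : StrongDual.toWeakDual '' (ι '' A) ⊆ S := by
    rintro - ⟨-, ⟨a, ha, rfl⟩, rfl⟩
    have hinf : infDist a K ≤ t := le_dhat' hAb hKne ha
    have hlt : infDist a K < t + ε := by linarith
    obtain ⟨k, hk, hdk⟩ := (infDist_lt_iff hKne).mp hlt
    have hmem1 : J (toWeakSpace ℝ X k) ∈ J '' (toWeakSpace ℝ X '' K) :=
      mem_image_of_mem _ (mem_image_of_mem _ hk)
    have hmem2 : StrongDual.toWeakDual (ι (a - k)) ∈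
        (WeakDual.toStrongDual ⁻¹' closedBall 0 (t + ε) : Set (WeakDual ℝ (StrongDual ℝ X))) := by
      simp only [mem_preimage, Metric.mem_closedBall, dist_zero_right]
      have : WeakDual.toStrongDual (StrongDual.toWeakDual (ι (a - k))) = ι (a - k) := rfl
      rw [this]
      have hnorm : ‖ι (a - k)‖ = ‖a - k‖ := by
        exact (inclusionInDoubleDualLi ℝ (E := X)).norm_map (a - k)
      rw [hnorm, ← dist_eq_norm]
      exact hdk.le
    have heq : StrongDual.toWeakDual (ι a) = J (toWeakSpace ℝ X k) + StrongDual.toWeakDual (ι (a - k)) := by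
      rw [hJ]
      dsimp only
      have h1 : (toWeakSpace ℝ X).symm (toWeakSpace ℝ X k) = k := (toWeakSpace ℝ X).symm_apply_apply k
      have h2 : k + (a - k) = a := by abel
      rw [h1, ← map_add, ← map_add, h2]
    rw [heq]
    exact Set.add_mem_add hmem1 hmem2
  have hclsub : closure (StrongDual.toWeakDual '' (ι '' A)) ⊆ S := closure_minimal hsub hSclosed
  -- now bound the sup
  have hclne : (wstarClosure (ι '' A)).Nonempty := by
    obtain ⟨a, ha⟩ := hA
    refine ⟨ι a, ?_⟩
    show StrongDual.toWeakDual (ι a) ∈ closure (StrongDual.toWeakDual '' (ι '' A))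
    exact subset_closure (mem_image_of_mem _ (mem_image_of_mem _ ha))
  rw [wkMeasure]
  apply dhat'_le hclne
  intro f hf
  have hfS : StrongDual.toWeakDual f ∈ S := hclsub hf
  obtain ⟨s₁, hs₁, s₂, hs₂, hsum⟩ := Set.mem_add.mp hfS
  obtain ⟨-, ⟨k, hk, rfl⟩, rfl⟩ := hs₁
  simp only [mem_preimage, Metric.mem_closedBall, dist_zero_right] at hs₂
  have hfeq : f = ι k + WeakDual.toStrongDual s₂ := by
    have h2 := congrArg WeakDual.toStrongDual hsum
    rw [map_add] at h2
    have h3 : WeakDual.toStrongDual (StrongDual.toWeakDual f) = f := rfl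
    have h4 : WeakDual.toStrongDual (J (toWeakSpace ℝ X k)) = ι k := by
      rw [hJ]
      dsimp only
      rw [(toWeakSpace ℝ X).symm_apply_apply k]
      rfl
    rw [h3, h4] at h2
    exact h2.symm
  calc infDist f (Set.range ι) ≤ dist f (ι k) := infDist_le_dist_of_mem ⟨k, rfl⟩
    _ = ‖f - ι k‖ := dist_eq_norm f (ι k)
    _ = ‖WeakDual.toStrongDual s₂‖ := by rw [hfeq, add_sub_cancel_left]
    _ ≤ t + ε := hs₂

end main

section main2
variable {Γ : Type*} [TopologicalSpace Γ] [DiscreteTopology Γ]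

local notation "X" => C₀(Γ, ℝ)
local notation "ι" => inclusionInDoubleDual ℝ C₀(Γ, ℝ)

lemma cl_norm_bound {A : Set X} (hAb : Bornology.IsBounded A) :
    ∃ C : ℝ, 0 ≤ C ∧ ∀ f ∈ wstarClosure (ι '' A), ‖f‖ ≤ C := by
  obtain ⟨C₀, hC₀⟩ := hAb.exists_norm_le
  refine ⟨max C₀ 0, le_max_right _ _, ?_⟩
  set C := max C₀ 0
  have hsub1 : StrongDual.toWeakDual '' (ι '' A) ⊆
      (WeakDual.toStrongDual ⁻¹' closedBall 0 C : Set (WeakDual ℝ (StrongDual ℝ X))) := by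
    rintro - ⟨-, ⟨a, ha, rfl⟩, rfl⟩
    simp only [mem_preimage, Metric.mem_closedBall, dist_zero_right]
    have h1 : WeakDual.toStrongDual (StrongDual.toWeakDual (ι a)) = ι a := rfl
    rw [h1]
    have hni : ‖ι a‖ = ‖a‖ := (inclusionInDoubleDualLi ℝ (E := X)).norm_map a
    rw [hni]
    exact le_max_of_le_left (hC₀ a ha)
  have hclosed : IsClosed (WeakDual.toStrongDual ⁻¹' closedBall 0 C :
      Set (WeakDual ℝ (StrongDual ℝ X))) := WeakDual.isClosed_closedBall 0 C
  have hsub2 := closure_minimal hsub1 hclosed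
  intro f hf
  have : StrongDual.toWeakDual f ∈ closure (StrongDual.toWeakDual '' (ι '' A)) := hf
  have h2 := hsub2 this
  simpa using h2

lemma cl_wstar_compact {A : Set X} (hAb : Bornology.IsBounded A) :
    IsCompact (StrongDual.toWeakDual '' wstarClosure (ι '' A)) := by
  obtain ⟨C, hC0, hC⟩ := cl_norm_bound hAb
  have himg : StrongDual.toWeakDual '' wstarClosure (ι '' A) =
      closure (StrongDual.toWeakDual '' (ι '' A)) := by
    rw [wstarClosure]
    exact Set.image_preimage_eq_of_subset (by
      intro v _
      exact ⟨WeakDual.toStrongDual v, rfl⟩)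
  rw [himg]
  apply IsCompact.of_isClosed_subset
    (WeakDual.isCompact_closedBall (𝕜 := ℝ) (E := StrongDual ℝ C₀(Γ, ℝ)) 0 C) isClosed_closure
  intro v hv
  obtain ⟨f, hf, rfl⟩ : v ∈ StrongDual.toWeakDual '' wstarClosure (ι '' A) := by rw [himg]; exact hv
  simp only [mem_preimage, Metric.mem_closedBall, dist_zero_right]
  exact hC f hf

lemma omega_le_wk {A : Set X} (hA : A.Nonempty) (hAb : Bornology.IsBounded A) :
    deBlasiOmega A ≤ wkMeasure A := by
  set cl := wstarClosure (ι '' A) with hcl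
  set r := wkMeasure A with hrdef
  have hwk : wkMeasure A = dhat' cl (Set.range ι) := rfl
  have hr : 0 ≤ r := by rw [hrdef, hwk]; exact dhat'_nonneg _ _
  obtain ⟨C, hC0, hC⟩ := cl_norm_bound hAb
  have hclb : Bornology.IsBounded cl := isBounded_iff_forall_norm_le.mpr ⟨C, hC⟩
  have hclsub : ι '' A ⊆ cl := by
    intro v hv
    show StrongDual.toWeakDual v ∈ closure (StrongDual.toWeakDual '' (ι '' A))
    exact subset_closure (mem_image_of_mem _ hv)
  have hclne : cl.Nonempty := by
    obtain ⟨a, ha⟩ := hA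
    exact ⟨ι a, hclsub (mem_image_of_mem _ ha)⟩
  have hdist : ∀ f ∈ cl, infDist f (Set.range ι) ≤ r := by
    intro f hf
    rw [hrdef, hwk]
    exact le_dhat' hclb (Set.range_nonempty _) hf
  have htd : ∀ f ∈ cl, Tendsto (fun γ => clampd r (f (delta γ))) (cocompact Γ) (nhds 0) :=
    fun f hf => trC0_tendsto hr (hdist f hf)
  set L := trC0 r '' cl with hL
  have hLne : L.Nonempty := hclne.image _
  have hLwc : IsWeaklyCompact L :=
    isCompact_weak_trC0 hr hC0 (cl_wstar_compact hAb) hC htd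
  have hdle : dhat A L ≤ r := by
    show dhat' A L ≤ r
    apply dhat'_le hA
    intro a ha
    have hmem : ι a ∈ cl := hclsub (mem_image_of_mem _ ha)
    have hLmem : trC0 r (ι a) ∈ L := mem_image_of_mem _ hmem
    calc infDist a L ≤ dist a (trC0 r (ι a)) := infDist_le_dist_of_mem hLmem
      _ = ‖a - trC0 r (ι a)‖ := dist_eq_norm _ _
      _ = ‖ι (a - trC0 r (ι a))‖ := ((inclusionInDoubleDualLi ℝ (E := X)).norm_map _).symm
      _ = ‖ι a - ι (trC0 r (ι a))‖ := by rw [map_sub]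
      _ ≤ r := norm_sub_trC0_le hr (htd (ι a) hmem)
  calc deBlasiOmega A ≤ dhat A L := by
        apply ciInf_le _ (⟨L, hLne, hLwc⟩ : {K : Set X // K.Nonempty ∧ IsWeaklyCompact K})
        refine ⟨0, ?_⟩
        rintro v ⟨K, rfl⟩
        exact dhat'_nonneg A K.1
    _ ≤ r := hdle

lemma wk_le_omega {A : Set X} (hA : A.Nonempty) (hAb : Bornology.IsBounded A) :
    wkMeasure A ≤ deBlasiOmega A := by
  have hne : Nonempty {K : Set X // K.Nonempty ∧ IsWeaklyCompact K} := by
    refine ⟨⟨{0}, singleton_nonempty 0, ?_⟩⟩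
    rw [IsWeaklyCompact, Set.image_singleton]
    exact isCompact_singleton
  exact le_ciInf fun K => wk_le_dhat hA hAb K.2.1 K.2.2

lemma part2 {K : Set (StrongDual ℝ (StrongDual ℝ X))} (hKne : K.Nonempty)
    (hKc : IsCompact (StrongDual.toWeakDual '' K)) :
    ∃ L : Set X, L.Nonempty ∧ IsWeaklyCompact L ∧
      dhat K (ι '' L) = dhat K (Set.range ι) := by
  obtain ⟨C, hC0, hC⟩ := wstar_compact_bounded hKc
  have hKb : Bornology.IsBounded K := isBounded_iff_forall_norm_le.mpr ⟨C, hC⟩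
  set r := dhat K (Set.range ι) with hrdef
  have hrr : dhat K (Set.range ι) = dhat' K (Set.range ι) := rfl
  have hr : 0 ≤ r := by rw [hrdef, hrr]; exact dhat'_nonneg _ _
  have hdist : ∀ f ∈ K, infDist f (Set.range ι) ≤ r := by
    intro f hf
    rw [hrdef, hrr]
    exact le_dhat' hKb (Set.range_nonempty _) hf
  have htd : ∀ f ∈ K, Tendsto (fun γ => clampd r (f (delta γ))) (cocompact Γ) (nhds 0) :=
    fun f hf => trC0_tendsto hr (hdist f hf)
  set L := trC0 r '' K with hL
  have hLne : L.Nonempty := hKne.image _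
  have hLwc : IsWeaklyCompact L := isCompact_weak_trC0 hr hC0 hKc hC htd
  refine ⟨L, hLne, hLwc, le_antisymm ?_ ?_⟩
  · show dhat' K (ι '' L) ≤ r
    apply dhat'_le hKne
    intro f hf
    have hLmem : ι (trC0 r f) ∈ ι '' L := mem_image_of_mem _ (mem_image_of_mem _ hf)
    calc infDist f (ι '' L) ≤ dist f (ι (trC0 r f)) := infDist_le_dist_of_mem hLmem
      _ = ‖f - ι (trC0 r f)‖ := dist_eq_norm _ _
      _ ≤ r := norm_sub_trC0_le hr (htd f hf)
  · show dhat' K (Set.range ι) ≤ dhat' K (ι '' L)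
    apply dhat'_anti hKb (hLne.image _)
    rintro - ⟨y, -, rfl⟩
    exact ⟨y, rfl⟩

end main2

end helpers

open ZeroAtInfty in
/-- For `X = c₀(Γ)` (Γ a discrete space), `wk_X(A) = ω(A)` for every nonempty
bounded `A ⊆ X`; moreover, for every nonempty weak* compact `K ⊆ X**` there is a nonempty
weakly compact `L ⊆ X` with `d̂(K, ι(L)) = d̂(K, ι(X))`. -/
theorem statement2 (Γ : Type*) [TopologicalSpace Γ] [DiscreteTopology Γ] :
    (∀ A : Set C₀(Γ, ℝ), A.Nonempty → Bornology.IsBounded A →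
      wkMeasure A = deBlasiOmega A) ∧
    (∀ K : Set (StrongDual ℝ (StrongDual ℝ C₀(Γ, ℝ))), K.Nonempty →
      IsCompact (StrongDual.toWeakDual '' K) →
      ∃ L : Set C₀(Γ, ℝ), L.Nonempty ∧ IsWeaklyCompact L ∧
        dhat K (inclusionInDoubleDual ℝ C₀(Γ, ℝ) '' L) =
          dhat K (Set.range (inclusionInDoubleDual ℝ C₀(Γ, ℝ)))) := by
  constructor
  · intro A hA hAb
    exact le_antisymm (wk_le_omega hA hAb) (omega_le_wk hA hAb)
  · intro K hKne hKc
    exact part2 hKne hKc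

end
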